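/- Let $w$ be a horizontal vector in $\mathbb{H}_n$ with $y_n(w) = 1$, let $P_w = V_0 \cap w^{\overline{\Omega}}$, $C_w = V_0 \cap w^\Omega$ (horizontal part), and let $\nu \in A \cap V_0$ be a horizontal unit vector orthogonal to $C_w$. Set $R_w = \{s\nu + p + tZ : p \in B_{C_w}(\mathbf{0},1), |s| \le 1, |t| \le 1\}$ and $Q_w(g,r) = \Pi_w(g\,\delta_r(R_w))$. Then for any $g \in \mathbb{H}_n$, $r > 0$, and $u \in V_0$, the intersection $Q_w(g,r) \cap uP_w$ is either empty or a quasiball of radius comparable to $r$ in the coset $uP_w$; in fact, for $s \in \mathbb{R}$, $\Pi_w(g\,\delta_r(R_w \cap \nu^{s} P_w))$ is a left-translate of $\delta_r(R_w \cap \nu^{s} P_w)$. -/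

import Mathlib

open scoped BigOperators
noncomputable section

/-- The Heisenberg group `ℍ_n`, as `ℝ^n × ℝ^n × ℝ`. -/
@[ext]
structure Heis (n : ℕ) where
  x : Fin n → ℝ
  y : Fin n → ℝ
  z : ℝ

namespace Heis

variable {n : ℕ}

/-- The standard symplectic form on `ℝ^{2n}`. -/
def Om (v w : (Fin n → ℝ) × (Fin n → ℝ)) : ℝ :=
  ∑ i, (v.1 i * w.2 i - w.1 i * v.2 i)

/-- The horizontal projection `π : ℍ_n → ℝ^{2n}`. -/
def pr (h : Heis n) : (Fin n → ℝ) × (Fin n → ℝ) := (h.x, h.y)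

lemma Om_add_left (x1 x2 y1 y2 : Fin n → ℝ) (w : (Fin n → ℝ) × (Fin n → ℝ)) :
    Om (x1 + x2, y1 + y2) w = Om (x1, y1) w + Om (x2, y2) w := by
  simp only [Om, Pi.add_apply]
  rw [← Finset.sum_add_distrib]
  exact Finset.sum_congr rfl (fun i _ => by ring)

lemma Om_add_right (v : (Fin n → ℝ) × (Fin n → ℝ)) (x1 x2 y1 y2 : Fin n → ℝ) :
    Om v (x1 + x2, y1 + y2) = Om v (x1, y1) + Om v (x2, y2) := by
  simp only [Om, Pi.add_apply]
  rw [← Finset.sum_add_distrib]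
  exact Finset.sum_congr rfl (fun i _ => by ring)

lemma Om_neg_self (x y : Fin n → ℝ) : Om (-x, -y) (x, y) = 0 := by
  simp only [Om, Pi.neg_apply]
  exact Finset.sum_eq_zero (fun i _ => by ring)

def mul' (g h : Heis n) : Heis n :=
  ⟨g.x + h.x, g.y + h.y, g.z + h.z + Om (pr g) (pr h) / 2⟩

instance : Group (Heis n) where
  mul := mul'
  one := ⟨0, 0, 0⟩
  inv g := ⟨-g.x, -g.y, -g.z⟩
  mul_assoc a b c := by
    show mul' (mul' a b) c = mul' a (mul' b c)
    simp only [mul', pr, Om_add_left, Om_add_right]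
    refine Heis.ext ?_ ?_ ?_
    · exact add_assoc _ _ _
    · exact add_assoc _ _ _
    · ring
  one_mul a := by
    show mul' ⟨0, 0, 0⟩ a = a
    simp only [mul', pr, Om]
    refine Heis.ext ?_ ?_ ?_ <;> simp
  mul_one a := by
    show mul' a ⟨0, 0, 0⟩ = a
    simp only [mul', pr, Om]
    refine Heis.ext ?_ ?_ ?_ <;> simp
  inv_mul_cancel a := by
    show mul' ⟨-a.x, -a.y, -a.z⟩ a = ⟨0, 0, 0⟩
    simp only [mul', pr]
    refine Heis.ext ?_ ?_ ?_
    · simp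
    · simp
    · simp [Om_neg_self]

lemma mul_def (g h : Heis n) :
    g * h = ⟨g.x + h.x, g.y + h.y, g.z + h.z + Om (pr g) (pr h) / 2⟩ := rfl

lemma one_def : (1 : Heis n) = ⟨0, 0, 0⟩ := rfl

lemma inv_def (g : Heis n) : g⁻¹ = ⟨-g.x, -g.y, -g.z⟩ := rfl

/-- The anisotropic dilations `δ_t`. -/
def dil (t : ℝ) (h : Heis n) : Heis n := ⟨t • h.x, t • h.y, t ^ 2 * h.z⟩

/-- The coordinate function `y_n` (the last `y`-coordinate). -/
def yn (h : Heis n) : ℝ := if hn : n = 0 then 0 else h.y ⟨n - 1, by omega⟩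

/-- A point of `ℍ_n` is a horizontal vector if its `z`-coordinate vanishes. -/
def IsHoriz (h : Heis n) : Prop := h.z = 0

/-- The vertical plane `V_0 = {y_n = 0}`. -/
def V0 (n : ℕ) : Set (Heis n) := {h | yn h = 0}

/-- `w^t = δ_t(w)`, for `w` a horizontal vector. -/
def wpow (w : Heis n) (t : ℝ) : Heis n := dil t w

/-- The projection to `V_0` along cosets of `⟨w⟩`: `Π_w(h) = h ⬝ w^{-y_n(h)}`. -/
def Piw (w : Heis n) (h : Heis n) : Heis n := h * wpow w (-(yn h))

/-- `Ω̄(g,h) = Ω(π(g), π(h))`. -/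
def Obar (g h : Heis n) : ℝ := Om (pr g) (pr h)

/-- The subgroup `P_w = V_0 ∩ w^{Ω̄}`. -/
def Pw (w : Heis n) : Set (Heis n) := {h | yn h = 0 ∧ Obar h w = 0}

/-- The horizontal subspace `C_w = A ∩ V_0 ∩ w^Ω`. -/
def Cw (w : Heis n) : Set (Heis n) := {h | h.z = 0 ∧ yn h = 0 ∧ Obar h w = 0}

/-- The Euclidean inner product of the horizontal coordinates. -/
def edot (g h : Heis n) : ℝ := ∑ i, g.x i * h.x i + ∑ i, g.y i * h.y i

/-- The `w`-intrinsic graph of a function `f : V_0 → ℝ`. -/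
def graphOf (f : Heis n → ℝ) (w : Heis n) : Set (Heis n) :=
  (fun v => v * wpow w (f v)) '' V0 n

/-- The vector `Y_n`. -/
def Yvec (n : ℕ) : Heis n := ⟨0, fun i => if (i : ℕ) = n - 1 then 1 else 0, 0⟩

section Metric

variable [MetricSpace (Heis n)]

/-- The open double cone `Cone_λ`. -/
def Cone (lam : ℝ) : Set (Heis n) := {p | lam * dist (1 : Heis n) p < |yn p|}

/-- `Γ` is an intrinsic `λ`-Lipschitz graph: `(x ⬝ Cone_λ) ∩ Γ = ∅` for all `x ∈ Γ`. -/
def IsIntrinsicLipGraph (lam : ℝ) (Γ : Set (Heis n)) : Prop :=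
  ∀ x ∈ Γ, ∀ c ∈ Cone (n := n) lam, x * c ∉ Γ

end Metric

end Heis

namespace Heis

/-- The box `R_w` determined by `w` and a unit horizontal vector `ν ∈ V₀` orthogonal
to `C_w`: `R_w = {sν + p + tZ : p ∈ B_{C_w}(𝟎,1), |s| ≤ 1, |t| ≤ 1}`. -/
def Rw {n : ℕ} (w ν : Heis n) : Set (Heis n) :=
  {h | ∃ (s t : ℝ) (p : Heis n), p ∈ Cw w ∧ edot p p ≤ 1 ∧ |s| ≤ 1 ∧ |t| ≤ 1 ∧
    h = ⟨s • ν.x + p.x, s • ν.y + p.y, t⟩}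

/-- The distorted box `Q_w(g, r) = Π_w(g δ_r(R_w))`. -/
def Qw {n : ℕ} (w ν : Heis n) (g : Heis n) (r : ℝ) : Set (Heis n) :=
  Piw w '' ((g * ·) '' (dil r '' Rw w ν))

end Heis


namespace Heis

variable {n : ℕ}

lemma Om_smul_left' (a : ℝ) (x y : Fin n → ℝ) (v : (Fin n → ℝ) × (Fin n → ℝ)) :
    Om (a • x, a • y) v = a * Om (x, y) v := by
  simp only [Om, Pi.smul_apply, smul_eq_mul, Finset.mul_sum]
  exact Finset.sum_congr rfl fun i _ => by ring

lemma Om_smul_right' (a : ℝ) (v : (Fin n → ℝ) × (Fin n → ℝ)) (x y : Fin n → ℝ) :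
    Om v (a • x, a • y) = a * Om v (x, y) := by
  simp only [Om, Pi.smul_apply, smul_eq_mul, Finset.mul_sum]
  exact Finset.sum_congr rfl fun i _ => by ring

lemma Om_skew (u v : (Fin n → ℝ) × (Fin n → ℝ)) : Om u v = - Om v u := by
  simp only [Om, ← Finset.sum_neg_distrib]
  exact Finset.sum_congr rfl fun i _ => by ring

lemma Om_self' (v : (Fin n → ℝ) × (Fin n → ℝ)) : Om v v = 0 :=
  Finset.sum_eq_zero fun i _ => by ring

lemma Om_zero_left' (v : (Fin n → ℝ) × (Fin n → ℝ)) : Om (0, 0) v = 0 :=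
  Finset.sum_eq_zero fun i _ => by simp

lemma Om_zero_right' (v : (Fin n → ℝ) × (Fin n → ℝ)) : Om v (0, 0) = 0 :=
  Finset.sum_eq_zero fun i _ => by simp

lemma Obar_mul (a b c : Heis n) : Obar (a * b) c = Obar a c + Obar b c := by
  simpa [Obar, pr, mul_def] using Om_add_left a.x b.x a.y b.y (pr c)

lemma Om_neg_left (x y : Fin n → ℝ) (v : (Fin n → ℝ) × (Fin n → ℝ)) :
    Om (-x, -y) v = - Om (x, y) v := by
  have := Om_smul_left' (-1 : ℝ) x y v
  simpa using this

lemma Obar_inv (a c : Heis n) : Obar a⁻¹ c = - Obar a c := by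
  simpa [Obar, pr, inv_def] using Om_neg_left a.x a.y (pr c)

lemma Obar_dil (t : ℝ) (a c : Heis n) : Obar (dil t a) c = t * Obar a c := by
  simpa [Obar, pr, dil] using Om_smul_left' t a.x a.y (pr c)

lemma yn_mul' (a b : Heis n) : yn (a * b) = yn a + yn b := by
  unfold yn; split
  · simp
  · simp [mul_def]

lemma yn_inv' (a : Heis n) : yn a⁻¹ = - yn a := by
  unfold yn; split
  · simp
  · simp [inv_def]

lemma yn_dil' (t : ℝ) (a : Heis n) : yn (dil t a) = t * yn a := by
  unfold yn; split
  · simp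
  · simp [dil]

lemma dil_dil (a b : ℝ) (h : Heis n) : dil a (dil b h) = dil (a * b) h := by
  refine Heis.ext ?_ ?_ ?_ <;> simp [dil, smul_smul] <;> ring

lemma dil_one' (t : ℝ) : dil t (1 : Heis n) = 1 := by
  refine Heis.ext ?_ ?_ ?_ <;> simp [dil, one_def]

lemma key_identity (g w ν p : Heis n) (hwz : w.z = 0) (hνz : ν.z = 0)
    (hpw : Om (pr p) (pr w) = 0) (r s₀ t α : ℝ) :
    g * dil r ⟨s₀ • ν.x + p.x, s₀ • ν.y + p.y, t⟩ * wpow w α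
      = (g * dil (r * s₀) ν * wpow w α) *
          dil r ⟨p.x, p.y, t - s₀ * Om (pr ν) (pr p) / 2⟩ := by
  have hswap : Om (w.x, w.y) (p.x, p.y) = 0 := by
    rw [Om_skew]; simp only [pr] at hpw; rw [hpw, neg_zero]
  simp only [pr] at hpw
  refine Heis.ext ?_ ?_ ?_
  · funext i
    simp only [mul_def, dil, wpow, Pi.add_apply, Pi.smul_apply, smul_eq_mul]
    ring
  · funext i
    simp only [mul_def, dil, wpow, Pi.add_apply, Pi.smul_apply, smul_eq_mul]
    ring
  · simp only [mul_def, dil, wpow, pr, smul_add, smul_smul, Om_add_left, Om_add_right,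
      Om_smul_left', Om_smul_right', Om_zero_left', Om_zero_right', hpw, hswap, hwz, hνz]
    ring

lemma p2_identity (g w b : Heis n) (hwz : w.z = 0) (r α : ℝ) :
    g * dil r b * wpow w α
      = (g * wpow w α * (⟨0, 0, α * r * Om (pr b) (pr w)⟩ : Heis n)) * dil r b := by
  have hswap : Om (w.x, w.y) (b.x, b.y) = - Om (b.x, b.y) (w.x, w.y) := Om_skew _ _
  refine Heis.ext ?_ ?_ ?_
  · funext i
    simp only [mul_def, dil, wpow, Pi.add_apply, Pi.smul_apply, smul_eq_mul, Pi.zero_apply]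
    ring
  · funext i
    simp only [mul_def, dil, wpow, Pi.add_apply, Pi.smul_apply, smul_eq_mul, Pi.zero_apply]
    ring
  · simp only [mul_def, dil, wpow, pr, smul_add, smul_smul, Om_add_left, Om_add_right,
      Om_smul_left', Om_smul_right', Om_zero_left', Om_zero_right', hswap, hwz]
    ring

end Heis

namespace Heis

variable {n : ℕ}

/-- The homogeneous coordinate gauge. -/
def gauge (h : Heis n) : ℝ := (∑ i, |h.x i|) + (∑ i, |h.y i|) + Real.sqrt |h.z|

lemma gauge_nonneg (h : Heis n) : 0 ≤ gauge h := by
  have h1 : (0:ℝ) ≤ ∑ i, |h.x i| := Finset.sum_nonneg fun i _ => abs_nonneg _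
  have h2 : (0:ℝ) ≤ ∑ i, |h.y i| := Finset.sum_nonneg fun i _ => abs_nonneg _
  have h3 := Real.sqrt_nonneg |h.z|
  unfold gauge; linarith

lemma gauge_one : gauge (1 : Heis n) = 0 := by
  simp [gauge, one_def]

lemma gauge_eq_zero {h : Heis n} (hg : gauge h = 0) : h = 1 := by
  have h1 : (0:ℝ) ≤ ∑ i, |h.x i| := Finset.sum_nonneg fun i _ => abs_nonneg _
  have h2 : (0:ℝ) ≤ ∑ i, |h.y i| := Finset.sum_nonneg fun i _ => abs_nonneg _
  have h3 := Real.sqrt_nonneg |h.z|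
  unfold gauge at hg
  have hx : (∑ i, |h.x i|) = 0 := by linarith
  have hy : (∑ i, |h.y i|) = 0 := by linarith
  have hz : Real.sqrt |h.z| = 0 := by linarith
  have hz' : h.z = 0 := by
    have := (Real.sqrt_eq_zero (abs_nonneg h.z)).mp hz
    exact abs_eq_zero.mp this
  have hx' := (Finset.sum_eq_zero_iff_of_nonneg (fun i _ => abs_nonneg (h.x i))).mp hx
  have hy' := (Finset.sum_eq_zero_iff_of_nonneg (fun i _ => abs_nonneg (h.y i))).mp hy
  refine Heis.ext ?_ ?_ ?_
  · funext i; simpa [one_def] using abs_eq_zero.mp (hx' i (Finset.mem_univ i))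
  · funext i; simpa [one_def] using abs_eq_zero.mp (hy' i (Finset.mem_univ i))
  · simpa [one_def] using hz'

lemma gauge_dil (t : ℝ) (h : Heis n) : gauge (dil t h) = |t| * gauge h := by
  have hz : Real.sqrt (|t ^ 2| * |h.z|) = |t| * Real.sqrt |h.z| := by
    rw [abs_pow, sq_abs, Real.sqrt_mul (sq_nonneg t), Real.sqrt_sq_eq_abs]
  simp only [gauge, dil, Pi.smul_apply, smul_eq_mul, abs_mul, hz, ← Finset.mul_sum]
  ring

lemma gauge_inv (h : Heis n) : gauge h⁻¹ = gauge h := by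
  simp [gauge, inv_def]

lemma dil_id (h : Heis n) : dil 1 h = h := by
  refine Heis.ext ?_ ?_ ?_ <;> simp [dil]

end Heis

namespace Heis

variable {n : ℕ} [MetricSpace (Heis n)]

lemma dist_one_mul_le (hinv : ∀ g p q : Heis n, dist (g * p) (g * q) = dist p q)
    (a b : Heis n) : dist 1 (a * b) ≤ dist 1 a + dist 1 b := by
  have h2 : dist a (a * b) = dist 1 b := by
    have := hinv a 1 b; rwa [mul_one] at this
  calc dist 1 (a * b) ≤ dist 1 a + dist a (a * b) := dist_triangle _ _ _
    _ = dist 1 a + dist 1 b := by rw [h2]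

lemma dist_one_dil (hdil : ∀ (t : ℝ) (p q : Heis n), dist (dil t p) (dil t q) = |t| * dist p q)
    (t : ℝ) (h : Heis n) : dist 1 (dil t h) = |t| * dist 1 h := by
  have := hdil t 1 h; rwa [dil_one'] at this

lemma dist_one_inv (hinv : ∀ g p q : Heis n, dist (g * p) (g * q) = dist p q)
    (a : Heis n) : dist 1 a⁻¹ = dist 1 a := by
  have := hinv a 1 a⁻¹
  rw [mul_one, mul_inv_cancel] at this
  rw [← this, dist_comm]

lemma sqrt_add_le' (a b : ℝ) (ha : 0 ≤ a) (hb : 0 ≤ b) :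
    Real.sqrt (a + b) ≤ Real.sqrt a + Real.sqrt b := by
  rw [Real.sqrt_le_iff]
  constructor
  · positivity
  · nlinarith [Real.sq_sqrt ha, Real.sq_sqrt hb, Real.sqrt_nonneg a, Real.sqrt_nonneg b,
      mul_nonneg (Real.sqrt_nonneg a) (Real.sqrt_nonneg b)]

lemma sqrt_mul_le' (a b : ℝ) (ha : 0 ≤ a) (hb : 0 ≤ b) :
    Real.sqrt (a * b) ≤ (a + b) / 2 := by
  rw [Real.sqrt_le_iff]
  constructor
  · positivity
  · nlinarith [sq_nonneg (a - b)]

lemma horiz_x_bound (hinv : ∀ g p q : Heis n, dist (g * p) (g * q) = dist p q)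
    (hdil : ∀ (t : ℝ) (p q : Heis n), dist (dil t p) (dil t q) = |t| * dist p q)
    (x : Fin n → ℝ) : dist 1 (⟨x, 0, 0⟩ : Heis n) ≤
      ∑ i, |x i| * dist 1 (⟨Pi.single i 1, 0, 0⟩ : Heis n) := by
  suffices H : ∀ S : Finset (Fin n), ∀ x : Fin n → ℝ, (∀ i ∉ S, x i = 0) →
      dist 1 (⟨x, 0, 0⟩ : Heis n) ≤
        ∑ i ∈ S, |x i| * dist 1 (⟨Pi.single i 1, 0, 0⟩ : Heis n) by
    exact H Finset.univ x (fun i hi => absurd (Finset.mem_univ i) hi)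
  intro S
  induction S using Finset.induction_on with
  | empty =>
    intro x hx
    have hx0 : x = 0 := funext fun i => hx i (Finset.notMem_empty i)
    subst hx0
    have : (⟨0, 0, 0⟩ : Heis n) = 1 := rfl
    simp [this]
  | @insert a S ha IH =>
    intro x hx
    set x' := Function.update x a 0 with hx'def
    have hsplit : (⟨x, 0, 0⟩ : Heis n)
        = (⟨x', 0, 0⟩ : Heis n) * dil (x a) ⟨Pi.single a 1, 0, 0⟩ := by
      refine Heis.ext ?_ ?_ ?_
      · funext i
        by_cases hia : i = a
        · subst hia
          simp [mul_def, dil, hx'def, Function.update_self, Pi.single_eq_same]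
        · simp [mul_def, dil, hx'def, Function.update_of_ne hia, Pi.single_eq_of_ne hia]
      · funext i; simp [mul_def, dil]
      · simp [mul_def, dil, Om, pr]
    have hb : dist 1 (dil (x a) (⟨Pi.single a 1, 0, 0⟩ : Heis n))
        = |x a| * dist 1 (⟨Pi.single a 1, 0, 0⟩ : Heis n) := dist_one_dil hdil _ _
    have hIH : dist 1 (⟨x', 0, 0⟩ : Heis n) ≤
        ∑ i ∈ S, |x' i| * dist 1 (⟨Pi.single i 1, 0, 0⟩ : Heis n) := by
      refine IH x' fun i hi => ?_
      by_cases hia : i = a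
      · subst hia; simp [hx'def]
      · rw [hx'def, Function.update_of_ne hia]
        exact hx i (by simp [hia, hi])
    have hsum : ∑ i ∈ S, |x' i| * dist 1 (⟨Pi.single i 1, 0, 0⟩ : Heis n)
        = ∑ i ∈ S, |x i| * dist 1 (⟨Pi.single i 1, 0, 0⟩ : Heis n) := by
      refine Finset.sum_congr rfl fun i hi => ?_
      have hia : i ≠ a := fun e => ha (e ▸ hi)
      rw [hx'def, Function.update_of_ne hia]
    rw [Finset.sum_insert ha, hsplit]
    calc dist 1 ((⟨x', 0, 0⟩ : Heis n) * dil (x a) ⟨Pi.single a 1, 0, 0⟩)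
        ≤ dist 1 (⟨x', 0, 0⟩ : Heis n) + dist 1 (dil (x a) (⟨Pi.single a 1, 0, 0⟩ : Heis n)) :=
          dist_one_mul_le hinv _ _
      _ ≤ _ := by rw [hb]; rw [hsum] at hIH; linarith

lemma horiz_y_bound (hinv : ∀ g p q : Heis n, dist (g * p) (g * q) = dist p q)
    (hdil : ∀ (t : ℝ) (p q : Heis n), dist (dil t p) (dil t q) = |t| * dist p q)
    (y : Fin n → ℝ) : dist 1 (⟨0, y, 0⟩ : Heis n) ≤
      ∑ i, |y i| * dist 1 (⟨0, Pi.single i 1, 0⟩ : Heis n) := by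
  suffices H : ∀ S : Finset (Fin n), ∀ y : Fin n → ℝ, (∀ i ∉ S, y i = 0) →
      dist 1 (⟨0, y, 0⟩ : Heis n) ≤
        ∑ i ∈ S, |y i| * dist 1 (⟨0, Pi.single i 1, 0⟩ : Heis n) by
    exact H Finset.univ y (fun i hi => absurd (Finset.mem_univ i) hi)
  intro S
  induction S using Finset.induction_on with
  | empty =>
    intro y hy
    have hy0 : y = 0 := funext fun i => hy i (Finset.notMem_empty i)
    subst hy0
    have : (⟨0, 0, 0⟩ : Heis n) = 1 := rfl
    simp [this]
  | @insert a S ha IH =>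
    intro y hy
    set y' := Function.update y a 0 with hy'def
    have hsplit : (⟨0, y, 0⟩ : Heis n)
        = (⟨0, y', 0⟩ : Heis n) * dil (y a) ⟨0, Pi.single a 1, 0⟩ := by
      refine Heis.ext ?_ ?_ ?_
      · funext i; simp [mul_def, dil]
      · funext i
        by_cases hia : i = a
        · subst hia
          simp [mul_def, dil, hy'def, Function.update_self, Pi.single_eq_same]
        · simp [mul_def, dil, hy'def, Function.update_of_ne hia, Pi.single_eq_of_ne hia]
      · simp [mul_def, dil, Om, pr]
    have hb : dist 1 (dil (y a) (⟨0, Pi.single a 1, 0⟩ : Heis n))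
        = |y a| * dist 1 (⟨0, Pi.single a 1, 0⟩ : Heis n) := dist_one_dil hdil _ _
    have hIH : dist 1 (⟨0, y', 0⟩ : Heis n) ≤
        ∑ i ∈ S, |y' i| * dist 1 (⟨0, Pi.single i 1, 0⟩ : Heis n) := by
      refine IH y' fun i hi => ?_
      by_cases hia : i = a
      · subst hia; simp [hy'def]
      · rw [hy'def, Function.update_of_ne hia]
        exact hy i (by simp [hia, hi])
    have hsum : ∑ i ∈ S, |y' i| * dist 1 (⟨0, Pi.single i 1, 0⟩ : Heis n)
        = ∑ i ∈ S, |y i| * dist 1 (⟨0, Pi.single i 1, 0⟩ : Heis n) := by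
      refine Finset.sum_congr rfl fun i hi => ?_
      have hia : i ≠ a := fun e => ha (e ▸ hi)
      rw [hy'def, Function.update_of_ne hia]
    rw [Finset.sum_insert ha, hsplit]
    calc dist 1 ((⟨0, y', 0⟩ : Heis n) * dil (y a) ⟨0, Pi.single a 1, 0⟩)
        ≤ dist 1 (⟨0, y', 0⟩ : Heis n) + dist 1 (dil (y a) (⟨0, Pi.single a 1, 0⟩ : Heis n)) :=
          dist_one_mul_le hinv _ _
      _ ≤ _ := by rw [hb]; rw [hsum] at hIH; linarith

lemma zed_bound (hdil : ∀ (t : ℝ) (p q : Heis n), dist (dil t p) (dil t q) = |t| * dist p q)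
    (z : ℝ) : dist 1 (⟨0, 0, z⟩ : Heis n) ≤
      Real.sqrt |z| * (dist 1 (⟨0, 0, 1⟩ : Heis n) + dist 1 (⟨0, 0, -1⟩ : Heis n)) := by
  have d1 : (0:ℝ) ≤ dist (1 : Heis n) ⟨0, 0, 1⟩ := dist_nonneg
  have d2 : (0:ℝ) ≤ dist (1 : Heis n) ⟨0, 0, -1⟩ := dist_nonneg
  have hs : (0:ℝ) ≤ Real.sqrt |z| := Real.sqrt_nonneg _
  rcases le_or_gt 0 z with hz | hz
  · have he : (⟨0, 0, z⟩ : Heis n) = dil (Real.sqrt z) ⟨0, 0, 1⟩ := by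
      refine Heis.ext ?_ ?_ ?_ <;> simp [dil, Real.sq_sqrt hz]
    rw [he, dist_one_dil hdil, abs_of_nonneg (Real.sqrt_nonneg _), abs_of_nonneg hz]
    nlinarith [mul_nonneg (Real.sqrt_nonneg z) d2]
  · have hz' : |z| = -z := abs_of_neg hz
    have he : (⟨0, 0, z⟩ : Heis n) = dil (Real.sqrt (-z)) ⟨0, 0, -1⟩ := by
      refine Heis.ext ?_ ?_ ?_ <;>
        simp [dil, Real.sq_sqrt (le_of_lt (neg_pos.mpr hz))]
    rw [he, dist_one_dil hdil, abs_of_nonneg (Real.sqrt_nonneg _), hz']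
    nlinarith [mul_nonneg (Real.sqrt_nonneg (-z)) d1]

lemma gauge_upper (hinv : ∀ g p q : Heis n, dist (g * p) (g * q) = dist p q)
    (hdil : ∀ (t : ℝ) (p q : Heis n), dist (dil t p) (dil t q) = |t| * dist p q) :
    ∃ C : ℝ, 0 < C ∧ ∀ h : Heis n, dist 1 h ≤ C * gauge h := by
  set A : ℝ := 1 + (∑ i, dist 1 (⟨Pi.single i 1, 0, 0⟩ : Heis n))
      + (∑ i, dist 1 (⟨0, Pi.single i 1, 0⟩ : Heis n))
      + dist 1 (⟨0, 0, 1⟩ : Heis n) + dist 1 (⟨0, 0, -1⟩ : Heis n) with hA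
  have hsx : (0:ℝ) ≤ ∑ i, dist 1 (⟨Pi.single i 1, 0, 0⟩ : Heis n) :=
    Finset.sum_nonneg fun i _ => dist_nonneg
  have hsy : (0:ℝ) ≤ ∑ i, dist 1 (⟨0, Pi.single i 1, 0⟩ : Heis n) :=
    Finset.sum_nonneg fun i _ => dist_nonneg
  have hz1 : (0:ℝ) ≤ dist (1 : Heis n) ⟨0, 0, 1⟩ := dist_nonneg
  have hz2 : (0:ℝ) ≤ dist (1 : Heis n) ⟨0, 0, -1⟩ := dist_nonneg
  have hA1 : (1:ℝ) ≤ A := by rw [hA]; linarith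
  have hApos : (0:ℝ) < A := lt_of_lt_of_le one_pos hA1
  refine ⟨2 * A, by linarith, fun h => ?_⟩
  -- decomposition
  set S : ℝ := ∑ i, h.x i * h.y i with hS
  have hdec : h = (⟨h.x, 0, 0⟩ : Heis n) * ⟨0, h.y, 0⟩ * ⟨0, 0, h.z - S / 2⟩ := by
    refine Heis.ext ?_ ?_ ?_
    · funext i; simp [mul_def, dil]
    · funext i; simp [mul_def, dil]
    · simp [mul_def, Om, pr]; rw [hS]; ring
  set a : ℝ := ∑ i, |h.x i| with ha
  set b : ℝ := ∑ i, |h.y i| with hb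
  have ha0 : 0 ≤ a := Finset.sum_nonneg fun i _ => abs_nonneg _
  have hb0 : 0 ≤ b := Finset.sum_nonneg fun i _ => abs_nonneg _
  have hxb : dist 1 (⟨h.x, 0, 0⟩ : Heis n) ≤ a * A := by
    calc dist 1 (⟨h.x, 0, 0⟩ : Heis n)
        ≤ ∑ i, |h.x i| * dist 1 (⟨Pi.single i 1, 0, 0⟩ : Heis n) := horiz_x_bound hinv hdil _
      _ ≤ ∑ i, |h.x i| * A := by
          refine Finset.sum_le_sum fun i _ => ?_
          refine mul_le_mul_of_nonneg_left ?_ (abs_nonneg _)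
          have : dist 1 (⟨Pi.single i 1, 0, 0⟩ : Heis n)
              ≤ ∑ j, dist 1 (⟨Pi.single j 1, 0, 0⟩ : Heis n) :=
            Finset.single_le_sum (f := fun j => dist 1 (⟨Pi.single j 1, 0, 0⟩ : Heis n))
              (fun j _ => dist_nonneg) (Finset.mem_univ i)
          rw [hA]; linarith
      _ = a * A := by rw [ha, Finset.sum_mul]
  have hyb : dist 1 (⟨0, h.y, 0⟩ : Heis n) ≤ b * A := by
    calc dist 1 (⟨0, h.y, 0⟩ : Heis n)
        ≤ ∑ i, |h.y i| * dist 1 (⟨0, Pi.single i 1, 0⟩ : Heis n) := horiz_y_bound hinv hdil _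
      _ ≤ ∑ i, |h.y i| * A := by
          refine Finset.sum_le_sum fun i _ => ?_
          refine mul_le_mul_of_nonneg_left ?_ (abs_nonneg _)
          have : dist 1 (⟨0, Pi.single i 1, 0⟩ : Heis n)
              ≤ ∑ j, dist 1 (⟨0, Pi.single j 1, 0⟩ : Heis n) :=
            Finset.single_le_sum (f := fun j => dist 1 (⟨0, Pi.single j 1, 0⟩ : Heis n))
              (fun j _ => dist_nonneg) (Finset.mem_univ i)
          rw [hA]; linarith
      _ = b * A := by rw [hb, Finset.sum_mul]
  have hSb : |S| ≤ a * b := by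
    calc |S| ≤ ∑ i, |h.x i * h.y i| := Finset.abs_sum_le_sum_abs _ _
      _ = ∑ i, |h.x i| * |h.y i| := by simp [abs_mul]
      _ ≤ ∑ i, |h.x i| * b := by
          refine Finset.sum_le_sum fun i _ => ?_
          refine mul_le_mul_of_nonneg_left ?_ (abs_nonneg _)
          exact Finset.single_le_sum (f := fun j => |h.y j|)
            (fun j _ => abs_nonneg _) (Finset.mem_univ i)
      _ = a * b := by rw [ha, Finset.sum_mul]
  have hzq : Real.sqrt |h.z - S / 2| ≤ Real.sqrt |h.z| + (a + b) / 2 := by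
    have h1 : |h.z - S / 2| ≤ |h.z| + a * b := by
      calc |h.z - S / 2| ≤ |h.z| + |S| / 2 := by
            have := abs_sub (h.z) (S / 2)
            have h2 : |S / 2| = |S| / 2 := by rw [abs_div]; norm_num
            calc |h.z - S / 2| ≤ |h.z| + |S / 2| := abs_sub _ _
              _ = |h.z| + |S| / 2 := by rw [h2]
        _ ≤ |h.z| + a * b := by
            have h3 := abs_nonneg S
            linarith
    calc Real.sqrt |h.z - S / 2| ≤ Real.sqrt (|h.z| + a * b) := Real.sqrt_le_sqrt h1
      _ ≤ Real.sqrt |h.z| + Real.sqrt (a * b) :=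
          sqrt_add_le' _ _ (abs_nonneg _) (mul_nonneg ha0 hb0)
      _ ≤ Real.sqrt |h.z| + (a + b) / 2 := by
          have := sqrt_mul_le' a b ha0 hb0; linarith
  have hzb : dist 1 (⟨0, 0, h.z - S / 2⟩ : Heis n)
      ≤ (Real.sqrt |h.z| + (a + b) / 2) * A := by
    calc dist 1 (⟨0, 0, h.z - S / 2⟩ : Heis n)
        ≤ Real.sqrt |h.z - S / 2| * (dist 1 (⟨0, 0, 1⟩ : Heis n)
            + dist 1 (⟨0, 0, -1⟩ : Heis n)) := zed_bound hdil _
      _ ≤ (Real.sqrt |h.z| + (a + b) / 2) * A := by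
          have hq0 : (0:ℝ) ≤ Real.sqrt |h.z - S / 2| := Real.sqrt_nonneg _
          have hq1 : dist (1 : Heis n) ⟨0, 0, 1⟩ + dist (1 : Heis n) ⟨0, 0, -1⟩ ≤ A := by
            rw [hA]; linarith
          have hq2 : (0:ℝ) ≤ Real.sqrt |h.z| + (a + b) / 2 := by positivity
          nlinarith [Real.sqrt_nonneg |h.z|]
  have hfin : dist 1 h ≤ dist 1 (⟨h.x, 0, 0⟩ : Heis n) + dist 1 (⟨0, h.y, 0⟩ : Heis n)
      + dist 1 (⟨0, 0, h.z - S / 2⟩ : Heis n) := by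
    conv_lhs => rw [hdec]
    calc dist 1 ((⟨h.x, 0, 0⟩ : Heis n) * ⟨0, h.y, 0⟩ * ⟨0, 0, h.z - S / 2⟩)
        ≤ dist 1 ((⟨h.x, 0, 0⟩ : Heis n) * ⟨0, h.y, 0⟩)
            + dist 1 (⟨0, 0, h.z - S / 2⟩ : Heis n) := dist_one_mul_le hinv _ _
      _ ≤ _ := by
          have := dist_one_mul_le hinv (⟨h.x, 0, 0⟩ : Heis n) (⟨0, h.y, 0⟩ : Heis n)
          linarith
  have hgauge : gauge h = a + b + Real.sqrt |h.z| := rfl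
  have hsq : (0:ℝ) ≤ Real.sqrt |h.z| := Real.sqrt_nonneg _
  rw [hgauge]
  nlinarith [mul_nonneg ha0 (le_of_lt hApos), mul_nonneg hb0 (le_of_lt hApos),
    mul_nonneg hsq (le_of_lt hApos)]

end Heis

namespace Heis

variable {n : ℕ} [MetricSpace (Heis n)]

lemma gauge_lower (hinv : ∀ g p q : Heis n, dist (g * p) (g * q) = dist p q)
    (hdil : ∀ (t : ℝ) (p q : Heis n), dist (dil t p) (dil t q) = |t| * dist p q) :
    ∃ c : ℝ, 0 < c ∧ ∀ h : Heis n, c * gauge h ≤ dist 1 h := by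
  obtain ⟨C, hC, hCb⟩ := gauge_upper hinv hdil
  let φ : (Fin n → ℝ) × (Fin n → ℝ) × ℝ → Heis n := fun v => ⟨v.1, v.2.1, v.2.2⟩
  have hgaux : ∀ (F : ((Fin n → ℝ) × (Fin n → ℝ) × ℝ) → Heis n),
      (∀ i, Continuous fun v => (F v).x i) → (∀ i, Continuous fun v => (F v).y i) →
      (Continuous fun v => (F v).z) → Continuous fun v => gauge (F v) := by
    intro F hx hy hz
    unfold gauge
    exact ((continuous_finset_sum _ fun i _ => (hx i).abs).add
      (continuous_finset_sum _ fun i _ => (hy i).abs)).add ((hz.abs).sqrt)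
  have hgc : Continuous fun v : (Fin n → ℝ) × (Fin n → ℝ) × ℝ => gauge (φ v) := by
    refine hgaux φ (fun i => ?_) (fun i => ?_) ?_
    · exact (continuous_apply i).comp continuous_fst
    · exact (continuous_apply i).comp (continuous_fst.comp continuous_snd)
    · exact continuous_snd.comp continuous_snd
  have hfc : Continuous fun v : (Fin n → ℝ) × (Fin n → ℝ) × ℝ => dist 1 (φ v) := by
    rw [continuous_iff_continuousAt]
    intro v₀
    have hGc : Continuous fun v => C * gauge ((φ v₀)⁻¹ * φ v) := by
      refine Continuous.mul continuous_const ?_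
      refine hgaux (fun v => (φ v₀)⁻¹ * φ v) (fun i => ?_) (fun i => ?_) ?_
      · have : ∀ v, ((φ v₀)⁻¹ * φ v).x i = -(v₀.1 i) + v.1 i := fun v => rfl
        simp only [this]
        exact continuous_const.add ((continuous_apply i).comp continuous_fst)
      · have : ∀ v, ((φ v₀)⁻¹ * φ v).y i = -(v₀.2.1 i) + v.2.1 i := fun v => rfl
        simp only [this]
        exact continuous_const.add
          ((continuous_apply i).comp (continuous_fst.comp continuous_snd))
      · have : ∀ v, ((φ v₀)⁻¹ * φ v).z
            = -(v₀.2.2) + v.2.2 + (∑ i, (-(v₀.1 i) * v.2.1 i - v.1 i * -(v₀.2.1 i))) / 2 :=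
          fun v => rfl
        simp only [this]
        refine (continuous_const.add (continuous_snd.comp continuous_snd)).add ?_
        refine Continuous.div_const ?_ _
        refine continuous_finset_sum _ fun i _ => Continuous.sub ?_ ?_
        · exact continuous_const.mul
            ((continuous_apply i).comp (continuous_fst.comp continuous_snd))
        · exact (((continuous_apply i).comp continuous_fst).mul continuous_const)
    have key : ∀ v, |dist 1 (φ v) - dist 1 (φ v₀)| ≤ C * gauge ((φ v₀)⁻¹ * φ v) := by
      intro v
      have e1 : φ v = φ v₀ * ((φ v₀)⁻¹ * φ v) := by group
      have h1 : dist 1 (φ v) ≤ dist 1 (φ v₀) + dist 1 ((φ v₀)⁻¹ * φ v) := by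
        nth_rewrite 1 [e1]
        exact dist_one_mul_le hinv _ _
      have h2 : dist 1 (φ v₀) ≤ dist 1 (φ v) + dist 1 ((φ v₀)⁻¹ * φ v) := by
        have e2 : φ v₀ = φ v * ((φ v)⁻¹ * φ v₀) := by group
        have h3 := dist_one_mul_le hinv (φ v) ((φ v)⁻¹ * φ v₀)
        have h4 : dist 1 ((φ v)⁻¹ * φ v₀) = dist 1 ((φ v₀)⁻¹ * φ v) := by
          rw [← dist_one_inv hinv ((φ v)⁻¹ * φ v₀)]
          congr 1
          group
        rw [← e2, h4] at h3
        exact h3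
      have h5 := hCb ((φ v₀)⁻¹ * φ v)
      rw [abs_le]; constructor <;> linarith
    have hG0 : C * gauge ((φ v₀)⁻¹ * φ v₀) = 0 := by
      rw [inv_mul_cancel, gauge_one, mul_zero]
    rw [Metric.continuousAt_iff]
    intro ε hε
    obtain ⟨δ, hδ, hδ2⟩ := Metric.continuousAt_iff.mp hGc.continuousAt ε hε
    refine ⟨δ, hδ, fun {v} hv => ?_⟩
    have h6 := hδ2 hv
    rw [Real.dist_eq, hG0, sub_zero] at h6
    have h7 := key v
    have h8 : C * gauge ((φ v₀)⁻¹ * φ v) ≤ |C * gauge ((φ v₀)⁻¹ * φ v)| := le_abs_self _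
    rw [Real.dist_eq]
    calc |dist 1 (φ v) - dist 1 (φ v₀)| ≤ C * gauge ((φ v₀)⁻¹ * φ v) := h7
      _ ≤ |C * gauge ((φ v₀)⁻¹ * φ v)| := h8
      _ < ε := h6
  set Sc := {v : (Fin n → ℝ) × (Fin n → ℝ) × ℝ | gauge (φ v) = 1} with hSc
  have hclosed : IsClosed Sc := isClosed_eq hgc continuous_const
  have hbdd : Sc ⊆ Metric.closedBall 0 1 := by
    intro v hv
    have h1 : gauge (φ v) = 1 := hv
    have hax : (0:ℝ) ≤ ∑ i, |v.1 i| := Finset.sum_nonneg fun i _ => abs_nonneg _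
    have hay : (0:ℝ) ≤ ∑ i, |v.2.1 i| := Finset.sum_nonneg fun i _ => abs_nonneg _
    have haz : (0:ℝ) ≤ Real.sqrt |v.2.2| := Real.sqrt_nonneg _
    have hgx : (∑ i, |v.1 i|) ≤ 1 := by
      have : gauge (φ v) = (∑ i, |v.1 i|) + (∑ i, |v.2.1 i|) + Real.sqrt |v.2.2| := rfl
      linarith [this ▸ h1.le]
    have hgy : (∑ i, |v.2.1 i|) ≤ 1 := by
      have : gauge (φ v) = (∑ i, |v.1 i|) + (∑ i, |v.2.1 i|) + Real.sqrt |v.2.2| := rfl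
      linarith [this ▸ h1.le]
    have hgz : Real.sqrt |v.2.2| ≤ 1 := by
      have : gauge (φ v) = (∑ i, |v.1 i|) + (∑ i, |v.2.1 i|) + Real.sqrt |v.2.2| := rfl
      linarith [this ▸ h1.le]
    have hz1 : |v.2.2| ≤ 1 := by
      have h2 := Real.sq_sqrt (abs_nonneg v.2.2)
      nlinarith
    rw [Metric.mem_closedBall, dist_zero_right]
    rw [Prod.norm_def]
    refine max_le ?_ ?_
    · rw [pi_norm_le_iff_of_nonneg (by norm_num : (0:ℝ) ≤ 1)]
      intro i
      rw [Real.norm_eq_abs]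
      exact le_trans (Finset.single_le_sum (f := fun j => |v.1 j|)
        (fun j _ => abs_nonneg _) (Finset.mem_univ i)) hgx
    · rw [Prod.norm_def]
      refine max_le ?_ ?_
      · rw [pi_norm_le_iff_of_nonneg (by norm_num : (0:ℝ) ≤ 1)]
        intro i
        rw [Real.norm_eq_abs]
        exact le_trans (Finset.single_le_sum (f := fun j => |v.2.1 j|)
          (fun j _ => abs_nonneg _) (Finset.mem_univ i)) hgy
      · rw [Real.norm_eq_abs]; exact hz1
  have hcomp : IsCompact Sc :=
    Metric.isCompact_of_isClosed_isBounded hclosed (Metric.isBounded_closedBall.subset hbdd)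
  have hne : Sc.Nonempty := by
    refine ⟨(0, 0, 1), ?_⟩
    have : gauge (φ (0, 0, 1)) = 1 := by
      show (∑ i : Fin n, |(0:ℝ)|) + (∑ i : Fin n, |(0:ℝ)|) + Real.sqrt |(1:ℝ)| = 1
      simp
    exact this
  obtain ⟨v₀, hv₀, hmin⟩ := hcomp.exists_isMinOn hne hfc.continuousOn
  have hcpos : 0 < dist 1 (φ v₀) := by
    rw [dist_pos]
    intro e
    have h1 : gauge (φ v₀) = 1 := hv₀
    rw [← e, gauge_one] at h1
    norm_num at h1
  refine ⟨dist 1 (φ v₀), hcpos, fun h => ?_⟩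
  rcases eq_or_ne h 1 with rfl | hne1
  · simp [gauge_one]
  · set t := gauge h with htdef
    have ht : 0 < t :=
      lt_of_le_of_ne (gauge_nonneg h) (fun e => hne1 (gauge_eq_zero e.symm))
    have hdil1 : gauge (dil t⁻¹ h) = 1 := by
      rw [gauge_dil, abs_of_pos (inv_pos.mpr ht), ← htdef, inv_mul_cancel₀ (ne_of_gt ht)]
    have hvmem : ((dil t⁻¹ h).x, (dil t⁻¹ h).y, (dil t⁻¹ h).z) ∈ Sc := by
      have he : φ ((dil t⁻¹ h).x, (dil t⁻¹ h).y, (dil t⁻¹ h).z) = dil t⁻¹ h := rfl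
      show gauge (φ ((dil t⁻¹ h).x, (dil t⁻¹ h).y, (dil t⁻¹ h).z)) = 1
      rw [he, hdil1]
    have h7 : dist 1 (φ v₀) ≤ dist 1 (dil t⁻¹ h) := hmin hvmem
    have h8 : dist 1 h = t * dist 1 (dil t⁻¹ h) := by
      have e : dil t (dil t⁻¹ h) = h := by
        rw [dil_dil, mul_inv_cancel₀ (ne_of_gt ht), dil_id]
      have h9 := dist_one_dil hdil t (dil t⁻¹ h)
      rw [e, abs_of_pos ht] at h9
      exact h9
    rw [h8]
    have := mul_le_mul_of_nonneg_left h7 (le_of_lt ht)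
    linarith [this]

end Heis

namespace Heis

variable {n : ℕ}

lemma mem_cosetPw (u q w : Heis n) :
    q ∈ (u * ·) '' Pw w ↔ (yn q = yn u ∧ Obar q w = Obar u w) := by
  constructor
  · rintro ⟨ξ, hξ, rfl⟩
    refine ⟨?_, ?_⟩
    · rw [yn_mul', hξ.1, add_zero]
    · rw [Obar_mul, hξ.2, add_zero]
  · rintro ⟨h1, h2⟩
    refine ⟨u⁻¹ * q, ⟨?_, ?_⟩, by simp [mul_inv_cancel_left]⟩
    · rw [yn_mul', yn_inv', h1]; ring
    · rw [Obar_mul, Obar_inv, h2]; ring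

lemma sum_sq_le_sq_sum (f : Fin n → ℝ) : ∑ i, f i ^ 2 ≤ (∑ i, |f i|) ^ 2 := by
  have h1 : ∀ i ∈ Finset.univ, f i ^ 2 ≤ |f i| * ∑ j, |f j| := by
    intro i _
    have h2 : |f i| ≤ ∑ j, |f j| :=
      Finset.single_le_sum (f := fun j => |f j|) (fun j _ => abs_nonneg _) (Finset.mem_univ i)
    calc f i ^ 2 = |f i| * |f i| := by rw [← sq_abs]; ring
      _ ≤ |f i| * ∑ j, |f j| := mul_le_mul_of_nonneg_left h2 (abs_nonneg _)
  calc ∑ i, f i ^ 2 ≤ ∑ i, (|f i| * ∑ j, |f j|) := Finset.sum_le_sum h1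
    _ = (∑ i, |f i|) ^ 2 := by rw [← Finset.sum_mul]; ring

lemma Om_abs_le (ν : Heis n) (hν : ∀ i, |ν.x i| ≤ 1 ∧ |ν.y i| ≤ 1) (x y : Fin n → ℝ) :
    |Om (pr ν) (x, y)| ≤ (∑ i, |x i|) + (∑ i, |y i|) := by
  calc |Om (pr ν) (x, y)| ≤ ∑ i, |ν.x i * y i - x i * ν.y i| :=
        Finset.abs_sum_le_sum_abs _ _
    _ ≤ ∑ i, (|y i| + |x i|) := by
        refine Finset.sum_le_sum fun i _ => ?_
        have h1 := (hν i).1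
        have h2 := (hν i).2
        have h3 : |ν.x i * y i - x i * ν.y i| ≤ |ν.x i * y i| + |x i * ν.y i| := abs_sub _ _
        rw [abs_mul, abs_mul] at h3
        have h4 := abs_nonneg (y i)
        have h5 := abs_nonneg (x i)
        have h6 := abs_nonneg (ν.x i)
        have h7 := abs_nonneg (ν.y i)
        nlinarith
    _ = _ := by rw [Finset.sum_add_distrib]; ring

lemma coord_bound (p : Heis n) (h : edot p p ≤ 1) (i : Fin n) :
    |p.x i| ≤ 1 ∧ |p.y i| ≤ 1 := by
  have hxs : (0:ℝ) ≤ ∑ j, p.x j * p.x j := Finset.sum_nonneg fun j _ => mul_self_nonneg _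
  have hys : (0:ℝ) ≤ ∑ j, p.y j * p.y j := Finset.sum_nonneg fun j _ => mul_self_nonneg _
  have hx1 : p.x i * p.x i ≤ ∑ j, p.x j * p.x j :=
    Finset.single_le_sum (f := fun j => p.x j * p.x j)
      (fun j _ => mul_self_nonneg _) (Finset.mem_univ i)
  have hy1 : p.y i * p.y i ≤ ∑ j, p.y j * p.y j :=
    Finset.single_le_sum (f := fun j => p.y j * p.y j)
      (fun j _ => mul_self_nonneg _) (Finset.mem_univ i)
  have he : edot p p = (∑ j, p.x j * p.x j) + ∑ j, p.y j * p.y j := rfl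
  constructor
  · rw [abs_le]
    constructor <;> nlinarith
  · rw [abs_le]
    constructor <;> nlinarith

lemma sum_abs_le_card (f : Fin n → ℝ) (hf : ∀ i, |f i| ≤ 1) :
    (∑ i, |f i|) ≤ (n : ℝ) := by
  calc (∑ i, |f i|) ≤ ∑ _i : Fin n, (1:ℝ) := Finset.sum_le_sum fun i _ => hf i
    _ = (n : ℝ) := by simp

lemma sqrt_le_self' (x : ℝ) (hx : 1 ≤ x) : Real.sqrt x ≤ x := by
  rw [Real.sqrt_le_iff]
  constructor
  · linarith
  · nlinarith

end Heis
namespace Heis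

variable {n : ℕ}

lemma yn_eq (hn : n ≠ 0) (h : Heis n) : yn h = h.y ⟨n - 1, by omega⟩ := dif_neg hn

lemma yn_mk' (hn : n ≠ 0) (s : ℝ) (ν p : Heis n) (x' : Fin n → ℝ) (t : ℝ) :
    yn (⟨x', s • ν.y + p.y, t⟩ : Heis n) = s * yn ν + yn p := by
  simp only [yn, dif_neg hn]
  simp

lemma yn_mk_smul (hn : n ≠ 0) (a : ℝ) (d : Heis n) (x' : Fin n → ℝ) (t : ℝ) :
    yn (⟨x', a • d.y, t⟩ : Heis n) = a * yn d := by
  simp only [yn, dif_neg hn]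
  simp

end Heis

set_option maxHeartbeats 2000000

open Heis in
/-- (For any homogeneous left-invariant metric on `ℍ_n`, such as the
Carnot–Carathéodory metric.)  For any `g ∈ ℍ_n`, `r > 0` and `u ∈ V₀`, the slice
`Q_w(g,r) ∩ u P_w` is either empty or a quasiball of radius comparable to `r` in the
coset `u P_w`; in fact `Π_w(g δ_r(R_w ∩ ν^s P_w))` is a left-translate of
`δ_r(R_w ∩ ν^s P_w)`. -/
theorem Qw_slices_are_quasiballs {n : ℕ} (hn : 0 < n) [MetricSpace (Heis n)]
    (hinv : ∀ g p q : Heis n, dist (g * p) (g * q) = dist p q)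
    (hdil : ∀ (t : ℝ) (p q : Heis n), dist (dil t p) (dil t q) = |t| * dist p q)
    (w : Heis n) (hw : IsHoriz w) (hwy : yn w = 1)
    (ν : Heis n) (hν : IsHoriz ν) (hν0 : ν ∈ V0 n) (hν1 : edot ν ν = 1)
    (hνC : ∀ c ∈ Cw w, edot ν c = 0) :
    (∃ lamq : ℝ, 1 ≤ lamq ∧
      ∀ (g : Heis n) (r : ℝ) (u : Heis n), 0 < r → u ∈ V0 n →
        Qw w ν g r ∩ (u * ·) '' Pw w = ∅ ∨
        ∃ x ∈ (u * ·) '' Pw w,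
          {p ∈ (u * ·) '' Pw w | dist x p ≤ r / lamq} ⊆ Qw w ν g r ∩ (u * ·) '' Pw w ∧
          Qw w ν g r ∩ (u * ·) '' Pw w ⊆ {p ∈ (u * ·) '' Pw w | dist x p ≤ lamq * r}) ∧
    (∀ (g : Heis n) (r s : ℝ), 0 < r →
      ∃ h : Heis n,
        Piw w '' ((g * ·) '' (dil r '' (Rw w ν ∩ (dil s ν * ·) '' Pw w))) =
          (h * ·) '' (dil r '' (Rw w ν ∩ (dil s ν * ·) '' Pw w))) := by
  have hν0' : yn ν = 0 := hν0
  constructor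
  · obtain ⟨C, hC, hCb⟩ := gauge_upper hinv hdil
    obtain ⟨c, hc, hcb⟩ := gauge_lower hinv hdil
    have hκ : Obar ν w ≠ 0 := by
      intro e
      have hmem : ν ∈ Cw w := ⟨hν, hν0', e⟩
      have h1 := hνC ν hmem
      rw [hν1] at h1
      exact one_ne_zero h1
    have hνcoord : ∀ i, |ν.x i| ≤ 1 ∧ |ν.y i| ≤ 1 :=
      fun i => coord_bound ν (le_of_eq hν1) i
    set lamq := max (max 1 (2 / c)) (C * (3 * (n : ℝ) + 3)) with hlamq
    have hlamq1 : (1:ℝ) ≤ lamq := le_trans (le_max_left 1 (2 / c)) (le_max_left _ _)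
    have hlamqpos : (0:ℝ) < lamq := lt_of_lt_of_le one_pos hlamq1
    have hlamc : 2 ≤ c * lamq := by
      have h1 : 2 / c ≤ lamq := le_trans (le_max_right 1 (2 / c)) (le_max_left _ _)
      calc (2:ℝ) = c * (2 / c) := by field_simp
        _ ≤ c * lamq := mul_le_mul_of_nonneg_left h1 (le_of_lt hc)
    have hlamC : C * (3 * (n : ℝ) + 3) ≤ lamq := le_max_right _ _
    refine ⟨lamq, hlamq1, ?_⟩
    intro g r u hr hu
    have hu0 : yn u = 0 := hu
    set α := -(yn g) with hα
    set s₀ := (Obar u w - Obar g w) / (r * Obar ν w) with hs₀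
    have hQ : Qw w ν g r = (fun b => Piw w (g * dil r b)) '' Rw w ν := by
      unfold Qw
      rw [Set.image_image, Set.image_image]
    have hdata : ∀ (s t : ℝ) (p : Heis n), p ∈ Cw w →
        yn (⟨s • ν.x + p.x, s • ν.y + p.y, t⟩ : Heis n) = 0 ∧
        Obar (⟨s • ν.x + p.x, s • ν.y + p.y, t⟩ : Heis n) w = s * Obar ν w := by
      intro s t p hp
      obtain ⟨hpz, hpy, hpO⟩ := hp
      constructor
      · rw [yn_mk' hn.ne', hν0', hpy]; ring
      · show Om (s • ν.x + p.x, s • ν.y + p.y) (pr w) = s * Obar ν w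
        rw [Om_add_left, Om_smul_left']
        have h1 : Om (p.x, p.y) (pr w) = 0 := hpO
        rw [h1, add_zero]
        rfl
    have hform : ∀ (s t : ℝ) (p : Heis n), p ∈ Cw w →
        Piw w (g * dil r (⟨s • ν.x + p.x, s • ν.y + p.y, t⟩ : Heis n))
          = (g * dil (r * s) ν * wpow w α) *
              dil r ⟨p.x, p.y, t - s * Om (pr ν) (pr p) / 2⟩ := by
      intro s t p hp
      have hyb := (hdata s t p hp).1
      have h1 : yn (g * dil r (⟨s • ν.x + p.x, s • ν.y + p.y, t⟩ : Heis n)) = yn g := by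
        rw [yn_mul', yn_dil', hyb]; ring
      rw [Piw, h1, ← hα]
      exact key_identity g w ν p hw hν hp.2.2 r s t α
    have hObq : ∀ (s : ℝ) (pp : Heis n), Obar pp w = 0 →
        Obar ((g * dil (r * s) ν * wpow w α) * dil r pp) w
          = Obar g w + (r * s) * Obar ν w := by
      intro s pp hpp
      have hOw : Obar w w = 0 := Om_self' (pr w)
      rw [Obar_mul, Obar_mul, Obar_mul, Obar_dil, Obar_dil, hpp,
        show Obar (wpow w α) w = α * Obar w w from Obar_dil α w w, hOw]
      ring
    obtain ⟨xc, hxc⟩ : ∃ xc, xc = g * dil (r * s₀) ν * wpow w α := ⟨_, rfl⟩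
    have hxcyn : yn xc = 0 := by
      rw [hxc, yn_mul', yn_mul', yn_dil', hν0',
        show yn (wpow w α) = α * yn w from yn_dil' α w, hwy, hα]
      ring
    have hxcO : Obar xc w = Obar u w := by
      have hOw : Obar w w = 0 := Om_self' (pr w)
      rw [hxc, Obar_mul, Obar_mul, Obar_dil,
        show Obar (wpow w α) w = α * Obar w w from Obar_dil α w w, hOw, hs₀]
      field_simp
      ring
    by_cases hs1 : |s₀| ≤ 1
    · right
      refine ⟨xc, (mem_cosetPw u xc w).mpr ⟨by rw [hxcyn, hu0], hxcO⟩, ?_, ?_⟩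
      · -- inner inclusion
        rintro q ⟨hqmem, hqdist⟩
        refine ⟨?_, hqmem⟩
        obtain ⟨hqyn, hqO⟩ := (mem_cosetPw u q w).mp hqmem
        obtain ⟨d, hd⟩ : ∃ d, d = xc⁻¹ * q := ⟨_, rfl⟩
        have hqd : q = xc * d := by rw [hd, mul_inv_cancel_left]
        have hdist1 : dist 1 d = dist xc q := by
          have h1 := hinv xc 1 d
          rw [mul_one, ← hqd] at h1
          exact h1.symm
        have hdyn : yn d = 0 := by
          rw [hd, yn_mul', yn_inv', hqyn, hxcyn, hu0]; ring
        have hdO : Obar d w = 0 := by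
          rw [hd, Obar_mul, Obar_inv, hqO, hxcO]; ring
        have hgd : c * gauge d ≤ r / lamq :=
          calc c * gauge d ≤ dist 1 d := hcb d
            _ = dist xc q := hdist1
            _ ≤ r / lamq := hqdist
        have hgd2 : gauge d ≤ r / 2 := by
          have h1 : c * gauge d * lamq ≤ r := (le_div_iff₀ hlamqpos).mp hgd
          have h2 : 0 ≤ (c * lamq - 2) * gauge d :=
            mul_nonneg (by linarith) (gauge_nonneg d)
          nlinarith
        set a1 := ∑ i, |d.x i| with ha1
        set b1 := ∑ i, |d.y i| with hb1
        have hgde : gauge d = a1 + b1 + Real.sqrt |d.z| := rfl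
        have ha10 : 0 ≤ a1 := Finset.sum_nonneg fun i _ => abs_nonneg _
        have hb10 : 0 ≤ b1 := Finset.sum_nonneg fun i _ => abs_nonneg _
        have hsz0 : 0 ≤ Real.sqrt |d.z| := Real.sqrt_nonneg _
        have hab : a1 + b1 ≤ r / 2 := by rw [hgde] at hgd2; linarith
        have hszr : Real.sqrt |d.z| ≤ r / 2 := by rw [hgde] at hgd2; linarith
        set pp : Heis n := ⟨r⁻¹ • d.x, r⁻¹ • d.y, 0⟩ with hpp
        have hppC : pp ∈ Cw w := by
          refine ⟨rfl, ?_, ?_⟩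
          · show yn (⟨r⁻¹ • d.x, r⁻¹ • d.y, (0:ℝ)⟩ : Heis n) = 0
            rw [yn_mk_smul hn.ne', hdyn]; ring
          · show Om (r⁻¹ • d.x, r⁻¹ • d.y) (pr w) = 0
            rw [Om_smul_left']
            have h1 : Om (d.x, d.y) (pr w) = 0 := hdO
            rw [h1, mul_zero]
        have hxsq : ∑ i, d.x i * d.x i ≤ a1 ^ 2 := by
          have h1 : ∑ i, d.x i * d.x i = ∑ i, d.x i ^ 2 :=
            Finset.sum_congr rfl fun i _ => by ring
          rw [h1, ha1]
          exact sum_sq_le_sq_sum d.x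
        have hysq : ∑ i, d.y i * d.y i ≤ b1 ^ 2 := by
          have h1 : ∑ i, d.y i * d.y i = ∑ i, d.y i ^ 2 :=
            Finset.sum_congr rfl fun i _ => by ring
          rw [h1, hb1]
          exact sum_sq_le_sq_sum d.y
        have hedot : edot pp pp ≤ 1 := by
          have h1 : edot pp pp
              = r⁻¹ ^ 2 * ((∑ i, d.x i * d.x i) + ∑ i, d.y i * d.y i) := by
            show (∑ i, (r⁻¹ • d.x) i * (r⁻¹ • d.x) i)
                + (∑ i, (r⁻¹ • d.y) i * (r⁻¹ • d.y) i) = _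
            simp only [Pi.smul_apply, smul_eq_mul]
            rw [mul_add, Finset.mul_sum, Finset.mul_sum]
            congr 1 <;> exact Finset.sum_congr rfl fun i _ => by ring
          rw [h1]
          have h2 : (∑ i, d.x i * d.x i) + ∑ i, d.y i * d.y i ≤ (r / 2) ^ 2 := by
            have h3 : a1 ^ 2 + b1 ^ 2 ≤ (a1 + b1) ^ 2 := by nlinarith
            have h4 : (a1 + b1) ^ 2 ≤ (r / 2) ^ 2 := by nlinarith
            linarith
          have h5 : r⁻¹ ^ 2 * ((∑ i, d.x i * d.x i) + ∑ i, d.y i * d.y i)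
              ≤ r⁻¹ ^ 2 * (r / 2) ^ 2 := by
            refine mul_le_mul_of_nonneg_left h2 ?_
            positivity
          have h6 : r⁻¹ ^ 2 * (r / 2) ^ 2 = 1 / 4 := by
            field_simp
            ring
          linarith
        have hOmpp : |Om (pr ν) (pr pp)| ≤ 1 / 2 := by
          have h1 : Om (pr ν) (pr pp) = r⁻¹ * Om (pr ν) (d.x, d.y) :=
            Om_smul_right' r⁻¹ (pr ν) d.x d.y
          have h2 : |Om (pr ν) (d.x, d.y)| ≤ a1 + b1 := Om_abs_le ν hνcoord d.x d.y
          rw [h1, abs_mul, abs_of_pos (inv_pos.mpr hr)]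
          have h3 : r⁻¹ * |Om (pr ν) (d.x, d.y)| ≤ r⁻¹ * (r / 2) := by
            refine mul_le_mul_of_nonneg_left (le_trans h2 hab) ?_
            positivity
          have h4 : r⁻¹ * (r / 2) = 1 / 2 := by field_simp
          linarith
        set t'' := d.z / r ^ 2 with ht''
        set tt := t'' + s₀ * Om (pr ν) (pr pp) / 2 with htt
        have htle : |tt| ≤ 1 := by
          have h1 : |t''| ≤ 1 / 4 := by
            rw [ht'', abs_div, abs_of_pos (by positivity : (0:ℝ) < r ^ 2)]
            have h2 : |d.z| = Real.sqrt |d.z| ^ 2 := (Real.sq_sqrt (abs_nonneg d.z)).symm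
            rw [h2, div_le_iff₀ (by positivity : (0:ℝ) < r ^ 2)]
            nlinarith
          have h3 : |s₀ * Om (pr ν) (pr pp) / 2| ≤ 1 / 4 := by
            rw [abs_div, abs_mul]
            have h4 : |s₀| * |Om (pr ν) (pr pp)| ≤ 1 * (1 / 2) :=
              mul_le_mul hs1 hOmpp (abs_nonneg _) zero_le_one
            rw [abs_of_pos (by norm_num : (0:ℝ) < 2)]
            linarith
          calc |tt| ≤ |t''| + |s₀ * Om (pr ν) (pr pp) / 2| := abs_add_le _ _
            _ ≤ 1 := by linarith
        have hbR : (⟨s₀ • ν.x + pp.x, s₀ • ν.y + pp.y, tt⟩ : Heis n) ∈ Rw w ν :=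
          ⟨s₀, tt, pp, hppC, hedot, hs1, htle, rfl⟩
        have hqe : q = Piw w (g * dil r
            (⟨s₀ • ν.x + pp.x, s₀ • ν.y + pp.y, tt⟩ : Heis n)) := by
          rw [hform s₀ tt pp hppC]
          have h6 : tt - s₀ * Om (pr ν) (pr pp) / 2 = t'' := by rw [htt]; ring
          rw [h6, ← hxc, hqd]
          congr 1
          refine Heis.ext ?_ ?_ ?_
          · show d.x = r • r⁻¹ • d.x
            rw [smul_smul, mul_inv_cancel₀ (ne_of_gt hr), one_smul]
          · show d.y = r • r⁻¹ • d.y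
            rw [smul_smul, mul_inv_cancel₀ (ne_of_gt hr), one_smul]
          · show d.z = r ^ 2 * (d.z / r ^ 2)
            field_simp
        rw [hQ]
        exact ⟨_, hbR, hqe.symm⟩
      · -- outer inclusion
        rintro q ⟨hqQ, hqmem⟩
        refine ⟨hqmem, ?_⟩
        rw [hQ] at hqQ
        obtain ⟨b, hbR, hqe⟩ := hqQ
        obtain ⟨s, t, p, hpC, hed, hsle, htle2, hbe⟩ := hbR
        subst hbe
        obtain ⟨hqyn, hqO⟩ := (mem_cosetPw u q w).mp hqmem
        have hqe2 : q = Piw w (g * dil r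
            (⟨s • ν.x + p.x, s • ν.y + p.y, t⟩ : Heis n)) := hqe.symm
        rw [hqe2, hform s t p hpC] at hqO
        have hO' : Obar (⟨p.x, p.y, t - s * Om (pr ν) (pr p) / 2⟩ : Heis n) w = 0 :=
          hpC.2.2
        rw [hObq s _ hO'] at hqO
        have hss : s = s₀ := by
          rw [hs₀, eq_div_iff (mul_ne_zero (ne_of_gt hr) hκ)]
          linear_combination hqO
        subst hss
        have hq2 : q = xc * dil r (⟨p.x, p.y, t - s₀ * Om (pr ν) (pr p) / 2⟩ : Heis n) := by
          rw [hqe2, hform s₀ t p hpC, ← hxc]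
        have hdist2 : dist xc q
            = dist 1 (dil r (⟨p.x, p.y, t - s₀ * Om (pr ν) (pr p) / 2⟩ : Heis n)) := by
          have h1 := hinv xc 1 (dil r (⟨p.x, p.y, t - s₀ * Om (pr ν) (pr p) / 2⟩ : Heis n))
          rw [mul_one, ← hq2] at h1
          exact h1
        have hpcoord := fun i => coord_bound p hed i
        have hOm2 : |Om (pr ν) (pr p)| ≤ 2 * (n : ℝ) := by
          have h2 := Om_abs_le ν hνcoord p.x p.y
          have h3 := sum_abs_le_card p.x fun i => (hpcoord i).1
          have h4 := sum_abs_le_card p.y fun i => (hpcoord i).2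
          have h5 : Om (pr ν) (p.x, p.y) = Om (pr ν) (pr p) := rfl
          rw [h5] at h2
          linarith
        have htb : |t - s₀ * Om (pr ν) (pr p) / 2| ≤ (n : ℝ) + 1 := by
          have h1 : |t - s₀ * Om (pr ν) (pr p) / 2|
              ≤ |t| + |s₀ * Om (pr ν) (pr p) / 2| := abs_sub _ _
          have h2 : |s₀ * Om (pr ν) (pr p) / 2| = |s₀| * |Om (pr ν) (pr p)| / 2 := by
            rw [abs_div, abs_mul, abs_of_pos (by norm_num : (0:ℝ) < 2)]
          have h3 : |s₀| * |Om (pr ν) (pr p)| ≤ 1 * (2 * (n : ℝ)) :=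
            mul_le_mul hsle hOm2 (abs_nonneg _) zero_le_one
          rw [h2] at h1
          linarith
        have hgb : gauge (⟨p.x, p.y, t - s₀ * Om (pr ν) (pr p) / 2⟩ : Heis n)
            ≤ 3 * (n : ℝ) + 3 := by
          have h1 : gauge (⟨p.x, p.y, t - s₀ * Om (pr ν) (pr p) / 2⟩ : Heis n)
              = (∑ i, |p.x i|) + (∑ i, |p.y i|)
                + Real.sqrt |t - s₀ * Om (pr ν) (pr p) / 2| := rfl
          have h3 := sum_abs_le_card p.x fun i => (hpcoord i).1
          have h4 := sum_abs_le_card p.y fun i => (hpcoord i).2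
          have h5 : Real.sqrt |t - s₀ * Om (pr ν) (pr p) / 2| ≤ (n : ℝ) + 1 := by
            calc Real.sqrt |t - s₀ * Om (pr ν) (pr p) / 2|
                ≤ Real.sqrt ((n : ℝ) + 1) := Real.sqrt_le_sqrt htb
              _ ≤ (n : ℝ) + 1 := sqrt_le_self' _ (by
                  have := Nat.cast_nonneg (α := ℝ) n
                  linarith)
          rw [h1]
          linarith
        rw [hdist2, dist_one_dil hdil, abs_of_pos hr]
        have h8 : dist 1 (⟨p.x, p.y, t - s₀ * Om (pr ν) (pr p) / 2⟩ : Heis n)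
            ≤ C * (3 * (n : ℝ) + 3) := by
          calc dist 1 (⟨p.x, p.y, t - s₀ * Om (pr ν) (pr p) / 2⟩ : Heis n)
              ≤ C * gauge (⟨p.x, p.y, t - s₀ * Om (pr ν) (pr p) / 2⟩ : Heis n) := hCb _
            _ ≤ C * (3 * (n : ℝ) + 3) := mul_le_mul_of_nonneg_left hgb (le_of_lt hC)
        have h9 : dist 1 (⟨p.x, p.y, t - s₀ * Om (pr ν) (pr p) / 2⟩ : Heis n) ≤ lamq :=
          le_trans h8 hlamC
        have h10 := dist_nonneg (x := (1 : Heis n))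
          (y := (⟨p.x, p.y, t - s₀ * Om (pr ν) (pr p) / 2⟩ : Heis n))
        nlinarith
    · left
      rw [Set.eq_empty_iff_forall_notMem]
      rintro q ⟨hqQ, hqmem⟩
      rw [hQ] at hqQ
      obtain ⟨b, hbR, hqe⟩ := hqQ
      obtain ⟨s, t, p, hpC, hed, hsle, htle2, hbe⟩ := hbR
      subst hbe
      obtain ⟨hqyn, hqO⟩ := (mem_cosetPw u q w).mp hqmem
      have hqe2 : q = Piw w (g * dil r
          (⟨s • ν.x + p.x, s • ν.y + p.y, t⟩ : Heis n)) := hqe.symm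
      rw [hqe2, hform s t p hpC] at hqO
      have hO' : Obar (⟨p.x, p.y, t - s * Om (pr ν) (pr p) / 2⟩ : Heis n) w = 0 :=
        hpC.2.2
      rw [hObq s _ hO'] at hqO
      have hss : s = s₀ := by
        rw [hs₀, eq_div_iff (mul_ne_zero (ne_of_gt hr) hκ)]
        linear_combination hqO
      exact hs1 (hss ▸ hsle)
  · intro g r s hr
    set α := -(yn g) with hα
    refine ⟨g * wpow w α * (⟨0, 0, α * r * (s * Obar ν w)⟩ : Heis n), ?_⟩
    rw [Set.image_image, Set.image_image, Set.image_image]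
    refine Set.image_congr ?_
    rintro b ⟨hbR, ξ, hξ, hbe⟩
    have hκb : Obar b w = s * Obar ν w := by
      rw [← hbe, Obar_mul, Obar_dil, hξ.2, add_zero]
    have hyb : yn b = 0 := by
      rw [← hbe, yn_mul', yn_dil', hν0', hξ.1]; ring
    have h1 : yn (g * dil r b) = yn g := by
      rw [yn_mul', yn_dil', hyb]; ring
    show Piw w (g * dil r b) = _
    rw [Piw, h1, ← hα]
    have h2 := p2_identity g w b hw r α
    have h3 : Om (pr b) (pr w) = s * Obar ν w := hκb
    rw [h2, h3]
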